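/- For every yaw angle ψ ∈ ℝ and every v = (v₁, v₂, v₃) ∈ ℝ³ with v₃ + g > 0, the composition h_ψ(φ_ψ(v)) = v. In particular, under the input transformation u = φ_ψ(v), the quadcopter translational dynamics (ẍ, ÿ, z̈) = h_ψ(u) become the linear triple integrator-chain σ̈ = v. -/

import Mathlib

set_option maxHeartbeats 1000000


/-- Exact feedback linearization: `h_ψ (φ_ψ v) = v` for every `v` with `v₃ + g > 0`,
so under the input transformation `u = φ_ψ(v)` the translational dynamics
`(ẍ, ÿ, z̈) = h_ψ(u)` become the triple integrator chain `σ̈ = v`. -/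
theorem h_comp_phi (g ψ v1 v2 v3 : ℝ) (hg : 0 < g) (hv : v3 + g > 0) :
    let T := Real.sqrt (v1 ^ 2 + v2 ^ 2 + (v3 + g) ^ 2)
    let φ := Real.arcsin ((v1 * Real.sin ψ - v2 * Real.cos ψ) / T)
    let θ := Real.arctan ((v1 * Real.cos ψ + v2 * Real.sin ψ) / (v3 + g))
    T * (Real.cos φ * Real.sin θ * Real.cos ψ + Real.sin φ * Real.sin ψ) = v1 ∧
    T * (Real.cos φ * Real.sin θ * Real.sin ψ - Real.sin φ * Real.cos ψ) = v2 ∧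
    T * (Real.cos φ * Real.cos θ) - g = v3 := by
  intro T φ θ
  set a := v1 * Real.cos ψ + v2 * Real.sin ψ with ha
  set b := v1 * Real.sin ψ - v2 * Real.cos ψ with hb
  set c := v3 + g with hc
  have hc0 : 0 < c := hv
  have hpyth := Real.sin_sq_add_cos_sq ψ
  have hT2 : T ^ 2 = a ^ 2 + b ^ 2 + c ^ 2 := by
    have h1 : T ^ 2 = v1 ^ 2 + v2 ^ 2 + c ^ 2 :=
      Real.sq_sqrt (by positivity)
    rw [h1, ha, hb]; nlinarith [hpyth]
  have hT0 : 0 < T := Real.sqrt_pos.mpr (by positivity)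
  have hsc0 : 0 < a ^ 2 + c ^ 2 := by positivity
  set s := Real.sqrt (a ^ 2 + c ^ 2) with hs
  have hs0 : 0 < s := Real.sqrt_pos.mpr hsc0
  have hs2 : s ^ 2 = a ^ 2 + c ^ 2 := Real.sq_sqrt (le_of_lt hsc0)
  have hb2 : b ^ 2 ≤ T ^ 2 := by nlinarith
  have habs : |b| ≤ T := by nlinarith [abs_nonneg b, sq_abs b]
  have habs' : -1 ≤ b / T ∧ b / T ≤ 1 := by
    rw [abs_le] at habs
    constructor
    · rw [le_div_iff₀ hT0]; linarith [habs.1]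
    · rw [div_le_one hT0]; exact habs.2
  have hsinφ : Real.sin φ = b / T := Real.sin_arcsin habs'.1 habs'.2
  have hcosφ : Real.cos φ = s / T := by
    rw [show φ = Real.arcsin (b / T) from rfl, Real.cos_arcsin]
    have h2 : 1 - (b / T) ^ 2 = (a ^ 2 + c ^ 2) / T ^ 2 := by
      field_simp; nlinarith
    rw [h2, Real.sqrt_div hsc0.le, Real.sqrt_sq hT0.le]
  have hroot : Real.sqrt (1 + (a / c) ^ 2) = s / c := by
    have h1 : 1 + (a / c) ^ 2 = (a ^ 2 + c ^ 2) / c ^ 2 := by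
      field_simp; ring
    rw [h1, Real.sqrt_div hsc0.le, Real.sqrt_sq hc0.le]
  have hsinθ : Real.sin θ = a / s := by
    rw [show θ = Real.arctan (a / c) from rfl, Real.sin_arctan, hroot]
    field_simp
  have hcosθ : Real.cos θ = c / s := by
    rw [show θ = Real.arctan (a / c) from rfl, Real.cos_arctan, hroot]
    field_simp
  rw [hsinφ, hcosφ, hsinθ, hcosθ]
  clear_value θ φ s T c b a
  clear hv hb2 habs habs'
  refine ⟨?_, ?_, ?_⟩
  · field_simp
    linear_combination Real.cos ψ * ha + Real.sin ψ * hb + v1 * hpyth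
  · field_simp
    linear_combination Real.sin ψ * ha - Real.cos ψ * hb + v2 * hpyth
  · have h3 : T * (s / T * (c / s)) = c := by field_simp
    rw [h3, hc]; ring
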